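/- Let m be even and p odd with p | m. The group G(2m, 4p, 2) contains 2m + 3 elements of order 2 if 4 | m, and 2m + 1 elements of order 2 if 4 ∤ m. -/

import Mathlib

open Matrix

/-- The set of matrices of the group `G(m,p,2)`: diagonal and antidiagonal matrices
with entries powers `θ^{α₁}, θ^{α₂}` of `θ = exp(2πi/m)` with `α₁ + α₂ ≡ 0 (mod p)`. -/
noncomputable def Gmat (m p : ℕ) : Set (Matrix (Fin 2) (Fin 2) ℂ) :=
  {A | ∃ α₁ α₂ : ℕ, p ∣ (α₁ + α₂) ∧
    (A = !![Complex.exp (2 * Real.pi * Complex.I / m) ^ α₁, 0;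
            0, Complex.exp (2 * Real.pi * Complex.I / m) ^ α₂] ∨
     A = !![0, Complex.exp (2 * Real.pi * Complex.I / m) ^ α₁;
            Complex.exp (2 * Real.pi * Complex.I / m) ^ α₂, 0])}


/-- For `m` even and `p` odd with `p ∣ m`, the group `G(2m,4p,2)` contains `2m + 3`
elements of order `2` if `4 ∣ m`, and `2m + 1` such elements if `4 ∤ m`. -/
theorem stmt_15 (m p : ℕ) (hm : 0 < m) (hme : Even m) (hpo : Odd p) (hpm : p ∣ m) :
    {A ∈ Gmat (2 * m) (4 * p) | A * A = 1 ∧ A ≠ 1}.ncard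
      = if 4 ∣ m then 2 * m + 3 else 2 * m + 1 := by
  classical
  obtain ⟨c, hc⟩ := hpo
  obtain ⟨m', hm'⟩ : 2 ∣ m := hme.two_dvd
  set θ : ℂ := Complex.exp (2 * Real.pi * Complex.I / ((2 * m : ℕ) : ℂ)) with hθdef
  have h2m0 : (2 * m) ≠ 0 := by omega
  have hθprim : IsPrimitiveRoot θ (2 * m) := Complex.isPrimitiveRoot_exp _ h2m0
  have hθ0 : θ ≠ 0 := Complex.exp_ne_zero _
  have hθ2m : θ ^ (2 * m) = 1 := hθprim.pow_eq_one
  have hpow1 : ∀ α : ℕ, θ ^ α = 1 ↔ 2 * m ∣ α := fun α => hθprim.pow_eq_one_iff_dvd α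
  have hθm : θ ^ m = -1 := by
    have h2 : θ ^ m * θ ^ m = 1 := by rw [← pow_add]; simpa [two_mul] using hθ2m
    rcases mul_self_eq_one_iff.mp h2 with h | h
    · exact absurd h (hθprim.pow_ne_one_of_pos_of_lt (by omega) (by omega))
    · exact h
  have hpm' : p ∣ m' := by
    have hcop : Nat.Coprime p 2 := Nat.coprime_two_right.mpr ⟨c, hc⟩
    exact hcop.dvd_of_dvd_mul_left (by rwa [hm'] at hpm)
  have h4p2m : 4 * p ∣ 2 * m := by
    obtain ⟨k, hk⟩ := hpm'
    exact ⟨k, by rw [hm', hk]; ring⟩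
  have h4pm : 4 ∣ m → 4 * p ∣ m := by
    intro h4
    obtain ⟨q, hq⟩ := h4
    have hpq : p ∣ q := by
      have hcop : Nat.Coprime p 4 := by
        have : Nat.Coprime p 2 := Nat.coprime_two_right.mpr ⟨c, hc⟩
        simpa [show (4:ℕ) = 2*2 by norm_num] using this.mul_right this
      exact hcop.dvd_of_dvd_mul_left (by rwa [hq] at hpm)
    obtain ⟨k, hk⟩ := hpq
    exact ⟨k, by rw [hq, hk]; ring⟩
  have hneg : ∀ α : ℕ, θ ^ α = -1 ↔ ∃ u, α = m * u ∧ Odd u := by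
    intro α
    constructor
    · intro h
      have hsq : θ ^ (2 * α) = 1 := by rw [two_mul, pow_add, h]; ring
      obtain ⟨t, ht⟩ := (hpow1 _).mp hsq
      have hα : α = m * t := by
        have : 2 * α = 2 * (m * t) := by rw [ht]; ring
        omega
      refine ⟨t, hα, ?_⟩
      rcases Nat.even_or_odd t with he | ho
      · exfalso
        obtain ⟨s, hs⟩ := he
        rw [hα, hs, show m * (s + s) = 2 * m * s from by ring, pow_mul, hθ2m, one_pow] at h
        norm_num at h
      · exact ho
    · rintro ⟨u, rfl, hu⟩
      rw [pow_mul, hθm]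
      exact hu.neg_one_pow
  set d0 : Matrix (Fin 2) (Fin 2) ℂ := !![-1, 0; 0, -1] with hd0
  set d1 : Matrix (Fin 2) (Fin 2) ℂ := !![1, 0; 0, -1] with hd1
  set d2 : Matrix (Fin 2) (Fin 2) ℂ := !![-1, 0; 0, 1] with hd2
  set f : ℕ → Matrix (Fin 2) (Fin 2) ℂ := fun k => !![0, θ ^ k; θ ^ (2 * m - k), 0] with hf
  set T : Set (Matrix (Fin 2) (Fin 2) ℂ) := insert d0 (if 4 ∣ m then {d1, d2} else ∅) with hT
  have hfab : ∀ k, k < 2 * m → θ ^ k * θ ^ (2 * m - k) = 1 := by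
    intro k hk
    rw [← pow_add, show k + (2 * m - k) = 2 * m from by omega, hθ2m]
  -- the set equality
  have hset : {A ∈ Gmat (2 * m) (4 * p) | A * A = 1 ∧ A ≠ 1}
      = f '' Set.Iio (2 * m) ∪ T := by
    ext A
    simp only [Set.mem_setOf_eq, Set.mem_union, Set.mem_image, Set.mem_Iio, Gmat, ← hθdef]
    constructor
    · rintro ⟨⟨α₁, α₂, hdvd, hA | hA⟩, hA2, hA1⟩
      · -- diagonal
        subst hA
        have h00 : θ ^ α₁ * θ ^ α₁ = 1 := by
          have := congrFun (congrFun hA2 0) 0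
          simpa [Matrix.mul_apply, Fin.sum_univ_two, Matrix.one_apply] using this
        have h11 : θ ^ α₂ * θ ^ α₂ = 1 := by
          have := congrFun (congrFun hA2 1) 1
          simpa [Matrix.mul_apply, Fin.sum_univ_two, Matrix.one_apply] using this
        have key4 : ∀ a u : ℕ, α₁ + α₂ = 2 * m * a + m * u → Odd u → 4 ∣ m := by
          intro a u hsum hu
          have h4d : 4 ∣ α₁ + α₂ := dvd_trans (Dvd.intro p rfl) hdvd
          by_contra h4n
          have hm'odd : Odd m' := Nat.odd_iff.mpr (by omega)
          have hNodd : Odd (m' * (2 * a + u)) :=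
            Nat.odd_mul.mpr ⟨hm'odd, by obtain ⟨uu, huu⟩ := hu; exact ⟨a + uu, by omega⟩⟩
          obtain ⟨w, hw⟩ := hNodd
          have : α₁ + α₂ = 2 * (2 * w + 1) := by
            rw [hsum, hm', ← hw]; ring
          omega
        rcases mul_self_eq_one_iff.mp h00 with h1 | h1 <;>
          rcases mul_self_eq_one_iff.mp h11 with h2 | h2
        · exfalso
          apply hA1
          rw [h1, h2]
          exact Matrix.one_fin_two.symm
        · -- (1, -1): forces 4 ∣ m, A = d1
          obtain ⟨a, ha⟩ := (hpow1 α₁).mp h1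
          obtain ⟨u, hu, huo⟩ := (hneg α₂).mp h2
          have h4 : 4 ∣ m := key4 a u (by omega) huo
          refine Or.inr ?_
          rw [hT, if_pos h4]
          right; left
          rw [hd1, h1, h2]
        · -- (-1, 1): forces 4 ∣ m, A = d2
          obtain ⟨a, ha⟩ := (hpow1 α₂).mp h2
          obtain ⟨u, hu, huo⟩ := (hneg α₁).mp h1
          have h4 : 4 ∣ m := key4 a u (by omega) huo
          refine Or.inr ?_
          rw [hT, if_pos h4]
          right; right
          rw [hd2, h1, h2]
          rfl
        · -- (-1, -1): A = d0
          refine Or.inr ?_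
          rw [hT]
          left
          rw [hd0, h1, h2]
      · -- antidiagonal
        subst hA
        have h00 : θ ^ α₁ * θ ^ α₂ = 1 := by
          have := congrFun (congrFun hA2 0) 0
          simpa [Matrix.mul_apply, Fin.sum_univ_two, Matrix.one_apply] using this
        refine Or.inl ⟨α₁ % (2 * m), Nat.mod_lt _ (by omega), ?_⟩
        have ha1 : θ ^ α₁ = θ ^ (α₁ % (2 * m)) := by
          conv_lhs => rw [← Nat.div_add_mod α₁ (2 * m)]
          rw [pow_add, pow_mul, hθ2m, one_pow, one_mul]
        have ha2 : θ ^ α₂ = θ ^ (2 * m - α₁ % (2 * m)) := by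
          apply mul_left_cancel₀ (pow_ne_zero (α₁ % (2 * m)) hθ0)
          rw [hfab _ (Nat.mod_lt _ (by omega)), ← ha1, h00]
        rw [hf]
        simp only
        rw [ha1, ha2]
    · rintro (⟨k, hk, rfl⟩ | hA)
      · refine ⟨⟨k, 2 * m - k, ?_, Or.inr ?_⟩, ?_, ?_⟩
        · rw [show k + (2 * m - k) = 2 * m from by omega]; exact h4p2m
        · rw [hf]
        · have h1 : θ ^ k * θ ^ (2 * m - k) = 1 := hfab k hk
          have h2 : θ ^ (2 * m - k) * θ ^ k = 1 := by rw [mul_comm]; exact h1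
          rw [hf]
          simp only
          rw [Matrix.mul_fin_two, Matrix.one_fin_two]
          simp only [mul_zero, zero_mul, add_zero, zero_add, h1, h2]
        · intro h
          have := congrFun (congrFun h 0) 0
          simp [hf, Matrix.one_apply] at this
      · rw [hT, Set.mem_insert_iff] at hA
        rcases hA with h | h
        · -- A = d0
          subst h
          refine ⟨⟨m, m * (8 * c + 3), ⟨m, by rw [hc]; ring⟩, Or.inl ?_⟩, ?_, ?_⟩
          · rw [hθm, (hneg _).mpr ⟨8 * c + 3, rfl, ⟨4 * c + 1, by ring⟩⟩, hd0]
          · rw [hd0, Matrix.mul_fin_two, Matrix.one_fin_two]; norm_num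
          · intro h
            have := congrFun (congrFun h 0) 0
            rw [hd0] at this
            norm_num [Matrix.one_apply] at this
        · by_cases h4 : 4 ∣ m
          · rw [if_pos h4, Set.mem_insert_iff, Set.mem_singleton_iff] at h
            have hdv : 4 * p ∣ m := h4pm h4
            rcases h with h | h
            · -- A = d1
              subst h
              refine ⟨⟨0, m, by simpa using hdv, Or.inl ?_⟩, ?_, ?_⟩
              · rw [pow_zero, hθm, hd1]
              · rw [hd1, Matrix.mul_fin_two, Matrix.one_fin_two]; norm_num
              · intro h
                have := congrFun (congrFun h 1) 1
                rw [hd1] at this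
                norm_num [Matrix.one_apply] at this
            · -- A = d2
              subst h
              refine ⟨⟨m, 0, by simpa using hdv, Or.inl ?_⟩, ?_, ?_⟩
              · rw [pow_zero, hθm, hd2]
              · rw [hd2, Matrix.mul_fin_two, Matrix.one_fin_two]; norm_num
              · intro h
                have := congrFun (congrFun h 0) 0
                rw [hd2] at this
                norm_num [Matrix.one_apply] at this
          · rw [if_neg h4] at h
            exact absurd h (Set.notMem_empty _)
  -- counting
  have hinj : Set.InjOn f (Set.Iio (2 * m)) := by
    intro a ha b hb hab
    have hent : θ ^ a = θ ^ b := by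
      have := congrFun (congrFun hab 0) 1
      simpa [hf] using this
    exact hθprim.pow_inj ha hb hent
  have himg_fin : (f '' Set.Iio (2 * m)).Finite := (Set.finite_Iio _).image _
  have hTfin : T.Finite := by
    rw [hT]
    refine Set.Finite.insert _ ?_
    split_ifs
    · exact (Set.finite_singleton _).insert _
    · exact Set.finite_empty
  have hf00 : ∀ k, f k 0 0 = 0 := by intro k; simp [hf]
  have hdisj : Disjoint (f '' Set.Iio (2 * m)) T := by
    rw [Set.disjoint_left]
    rintro a ⟨k, _, rfl⟩ haT
    rw [hT] at haT
    rcases haT with h | h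
    · have := hf00 k
      rw [h, hd0] at this
      norm_num at this
    · split_ifs at h
      · rcases h with h | h
        · have := hf00 k
          rw [h, hd1] at this
          norm_num at this
        · have h' : f k = d2 := h
          have := hf00 k
          rw [h', hd2] at this
          norm_num at this
      · exact absurd h (Set.notMem_empty _)
  have hd01 : d0 ≠ d1 := by
    intro h
    have := congrFun (congrFun h 0) 0
    rw [hd0, hd1] at this
    norm_num at this
  have hd02 : d0 ≠ d2 := by
    intro h
    have := congrFun (congrFun h 1) 1
    rw [hd0, hd2] at this
    norm_num at this
  have hd12 : d1 ≠ d2 := by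
    intro h
    have := congrFun (congrFun h 0) 0
    rw [hd1, hd2] at this
    norm_num at this
  have hTcard : T.ncard = if 4 ∣ m then 3 else 1 := by
    by_cases h4 : 4 ∣ m
    · rw [hT, if_pos h4, if_pos h4]
      rw [Set.ncard_insert_of_notMem (by simp [hd01, hd02]), Set.ncard_pair hd12]
    · rw [hT, if_neg h4, if_neg h4]
      simp
  rw [hset, Set.ncard_union_eq hdisj himg_fin hTfin, Set.ncard_image_of_injOn hinj,
    ← Finset.coe_range, Set.ncard_coe_finset, Finset.card_range, hTcard]
  by_cases h4 : 4 ∣ m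
  · rw [if_pos h4, if_pos h4]
  · rw [if_neg h4, if_neg h4]
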